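/- For Re(s) > 1 and x ∈ ℂ \ (−∞,0], the Lewis–Zagier function ψ⁺_s(x) := ∑*_{m,n≥0} 1/(mx+n)^{2s} (where the term m=n=0 is omitted and terms with m=0 or n=0 are counted with weight 1/2) equals ∑_{n=1}^∞ (ζ(2s, nx) − (1/2)(nx)^{−2s} + (nx)^{1−2s}/(1−2s)) + (1/2)ζ(2s) + x^{1−2s}·ζ(2s−1)/(2s−1), where ζ(s,a) is the Hurwitz zeta function. -/

import Mathlib

open MeasureTheory Set

/-- Weight for the starred double sum: the term `m = n = 0` is omitted and the terms with
`m = 0` or `n = 0` are counted with multiplicity `1/2`. -/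
noncomputable def starWeight (m n : ℕ) : ℂ :=
  if m = 0 ∧ n = 0 then 0 else if m = 0 ∨ n = 0 then 1 / 2 else 1

/-- The Lewis–Zagier function `ψ⁺ₛ`. -/
noncomputable def psiPlus (s x : ℂ) : ℂ :=
  ∑' mn : ℕ × ℕ, starWeight mn.1 mn.2 / ((mn.1 : ℂ) * x + (mn.2 : ℂ)) ^ (2 * s)

/-- The Hurwitz zeta function `ζ(s, a)` as a series, for `Re(s) > 1`. -/
noncomputable def hurwitzZetaSeries (s a : ℂ) : ℂ := ∑' m : ℕ, 1 / ((m : ℂ) + a) ^ s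

open Complex

set_option maxHeartbeats 1000000

lemma myCpowRealMul (r : ℝ) (hr : 0 < r) {z : ℂ} (hz : z ≠ 0) (w : ℂ) :
    ((r : ℂ) * z) ^ w = (r : ℂ) ^ w * z ^ w := by
  have hr' : (r : ℂ) ≠ 0 := ofReal_ne_zero.mpr hr.ne'
  rw [cpow_def_of_ne_zero (mul_ne_zero hr' hz), cpow_def_of_ne_zero hr', cpow_def_of_ne_zero hz,
    log_ofReal_mul hr hz, ← Complex.ofReal_log hr.le, add_mul, exp_add]

lemma myNormCpowNeg {z : ℂ} (hz : z ≠ 0) (w : ℂ) :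
    ‖z ^ (-w)‖ ≤ Real.exp (Real.pi * |w.im|) * ‖z‖ ^ (-w.re) := by
  rw [norm_cpow_of_ne_zero hz, neg_re, neg_im]
  have h1 : |arg z * w.im| ≤ Real.pi * |w.im| := by
    rw [abs_mul]
    exact mul_le_mul_of_nonneg_right (abs_arg_le_pi z) (abs_nonneg _)
  have h2 : Real.exp (-(Real.pi * |w.im|)) ≤ Real.exp (arg z * -w.im) := by
    apply Real.exp_le_exp.mpr
    have := le_abs_self (arg z * w.im)
    nlinarith
  have h3 : (0:ℝ) < Real.exp (-(Real.pi * |w.im|)) := Real.exp_pos _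
  calc ‖z‖ ^ (-w.re) / Real.exp (arg z * -w.im)
      ≤ ‖z‖ ^ (-w.re) / Real.exp (-(Real.pi * |w.im|)) := by
        apply div_le_div_of_nonneg_left (Real.rpow_nonneg (norm_nonneg z) _) h3 h2
    _ = Real.exp (Real.pi * |w.im|) * ‖z‖ ^ (-w.re) := by
        rw [Real.exp_neg, div_inv_eq_mul, mul_comm]

lemma myRePos (x : ℂ) (hx : 0 < x.re) (m n : ℕ) (h : m + n ≠ 0) :
    0 < ((m:ℂ)*x + (n:ℂ)).re := by
  have hrez : ((m:ℂ)*x + n).re = m * x.re + n := by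
    simp [Complex.add_re, Complex.mul_re]
  rw [hrez]
  have hm0 : (0:ℝ) ≤ m := Nat.cast_nonneg m
  have hn0 : (0:ℝ) ≤ n := Nat.cast_nonneg n
  rcases Nat.eq_zero_or_pos m with hm | hm
  · subst hm
    have hn1 : 1 ≤ n := Nat.one_le_iff_ne_zero.mpr (by simpa using h)
    have : (1:ℝ) ≤ n := by exact_mod_cast hn1
    simp only [Nat.cast_zero, zero_mul, zero_add]; linarith
  · have : (1:ℝ) ≤ m := by exact_mod_cast hm
    nlinarith

lemma myNeZero (x : ℂ) (hx : 0 < x.re) (m n : ℕ) (h : m + n ≠ 0) :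
    ((m:ℂ)*x + (n:ℂ)) ≠ 0 := by
  intro hzero
  have := myRePos x hx m n h
  rw [hzero] at this; simp at this

lemma myChain (x : ℂ) (hx : 0 < x.re) (w : ℂ) (hw : 0 ≤ w.re) (m n : ℕ) (h : m + n ≠ 0) :
    ‖((m:ℂ)*x + (n:ℂ)) ^ (-w)‖ ≤
      (Real.exp (Real.pi * |w.im|) * (min x.re 1) ^ (-w.re) * 2 ^ w.re) *
        (((m:ℝ)+1) ^ (-(w.re/2)) * (((n:ℝ)+1) ^ (-(w.re/2)))) := by
  set σ := w.re with hσ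
  set c := min x.re 1 with hc
  have hc0 : 0 < c := lt_min hx one_pos
  have hm0 : (0:ℝ) ≤ m := Nat.cast_nonneg m
  have hn0 : (0:ℝ) ≤ n := Nat.cast_nonneg n
  have ha1 : (1:ℝ) ≤ (m:ℝ) + n := by
    have : 1 ≤ m + n := Nat.one_le_iff_ne_zero.mpr h
    exact_mod_cast this
  have hrez : ((m:ℂ)*x + n).re = m * x.re + n := by
    simp [Complex.add_re, Complex.mul_re]
  have hzne : ((m:ℂ)*x + n) ≠ 0 := myNeZero x hx m n h
  have b1 := myNormCpowNeg hzne w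
  have b2 : c * ((m:ℝ) + n) ≤ ‖(m:ℂ)*x + n‖ := by
    have h1 : ((m:ℂ)*x + n).re ≤ ‖(m:ℂ)*x + n‖ := by
      exact Complex.re_le_norm _
    rw [hrez] at h1
    have hc1 : c ≤ x.re := min_le_left _ _
    have hc2 : c ≤ 1 := min_le_right _ _
    nlinarith
  have b3 : ‖(m:ℂ)*x + n‖ ^ (-σ) ≤ (c * ((m:ℝ) + n)) ^ (-σ) :=
    Real.rpow_le_rpow_of_nonpos (by positivity) b2 (by linarith)
  have b4 : (c * ((m:ℝ) + n)) ^ (-σ) = c ^ (-σ) * ((m:ℝ) + n) ^ (-σ) :=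
    Real.mul_rpow hc0.le (by linarith)
  have b5 : ((m:ℝ) + n) ^ (-σ) ≤ 2 ^ σ * ((((m:ℝ)+1) * ((n:ℝ)+1)) ^ (-(σ/2))) := by
    set a : ℝ := (m:ℝ) + n with hadef
    set p : ℝ := ((m:ℝ)+1) * ((n:ℝ)+1) with hpdef
    have hp0 : 0 < p := by positivity
    have ha0 : 0 < a := by linarith
    have hpa : p ≤ (2*a)^2 := by nlinarith
    have key : p ^ (σ/2) ≤ 2 ^ σ * a ^ σ := by
      calc p ^ (σ/2) ≤ ((2*a)^2) ^ (σ/2) :=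
            Real.rpow_le_rpow hp0.le hpa (by linarith)
        _ = (2*a) ^ σ := by
            rw [← Real.rpow_two, ← Real.rpow_mul (by linarith)]
            congr 1; ring
        _ = 2 ^ σ * a ^ σ := Real.mul_rpow (by norm_num) ha0.le
    have hP : 0 < p ^ (σ/2) := Real.rpow_pos_of_pos hp0 _
    have hA : 0 < a ^ σ := Real.rpow_pos_of_pos ha0 _
    rw [Real.rpow_neg ha0.le, Real.rpow_neg hp0.le, inv_eq_one_div, inv_eq_one_div,
      mul_one_div, div_le_div_iff₀ hA hP]
    nlinarith
  have b6 : (((m:ℝ)+1) * ((n:ℝ)+1)) ^ (-(σ/2)) = ((m:ℝ)+1) ^ (-(σ/2)) * ((n:ℝ)+1) ^ (-(σ/2)) :=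
    Real.mul_rpow (by linarith) (by linarith)
  have hE : (0:ℝ) ≤ Real.exp (Real.pi * |w.im|) := (Real.exp_pos _).le
  calc ‖((m:ℂ)*x + (n:ℂ)) ^ (-w)‖ ≤ Real.exp (Real.pi * |w.im|) * ‖(m:ℂ)*x + n‖ ^ (-σ) := b1
    _ ≤ Real.exp (Real.pi * |w.im|) * (c ^ (-σ) * (2 ^ σ * ((((m:ℝ)+1) * ((n:ℝ)+1)) ^ (-(σ/2))))) := by
        apply mul_le_mul_of_nonneg_left _ hE
        calc ‖(m:ℂ)*x + n‖ ^ (-σ) ≤ (c * ((m:ℝ) + n)) ^ (-σ) := b3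
          _ = c ^ (-σ) * ((m:ℝ) + n) ^ (-σ) := b4
          _ ≤ c ^ (-σ) * (2 ^ σ * ((((m:ℝ)+1) * ((n:ℝ)+1)) ^ (-(σ/2)))) := by
              apply mul_le_mul_of_nonneg_left b5 (Real.rpow_nonneg hc0.le _)
    _ = (Real.exp (Real.pi * |w.im|) * c ^ (-σ) * 2 ^ σ) *
          (((m:ℝ)+1) ^ (-(σ/2)) * (((n:ℝ)+1) ^ (-(σ/2)))) := by
        rw [b6]; ring

theorem psiPlus_eq_hurwitz_sum (s x : ℂ) (hs : 1 < s.re) (hx : 0 < x.re) :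
    psiPlus s x =
      (∑' n : ℕ, (hurwitzZetaSeries (2 * s) ((n + 1) * x) -
          (1 / 2) * ((n + 1 : ℂ) * x) ^ (-(2 * s)) +
          ((n + 1 : ℂ) * x) ^ (1 - 2 * s) / (1 - 2 * s))) +
        (1 / 2) * riemannZeta (2 * s) +
        x ^ (1 - 2 * s) * riemannZeta (2 * s - 1) / (2 * s - 1) := by
  have h2s : 2 < (2*s).re := by
    have h : (2*s).re = 2 * s.re := by simp [Complex.mul_re]
    rw [h]; linarith
  have h2s1 : 1 < (2*s).re := by linarith
  have h2sne : (2*s : ℂ) ≠ 0 := by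
    intro h; rw [h] at h2s; norm_num at h2s
  have h2sm1 : 1 < (2*s - 1).re := by
    rw [Complex.sub_re, Complex.one_re]; linarith
  have hσ0 : (0:ℝ) ≤ (2*s).re := by linarith
  have hxne : x ≠ 0 := by
    intro h; rw [h] at hx; simp at hx
  simp only [psiPlus]
  set g : ℕ × ℕ → ℂ :=
    fun mn => starWeight mn.1 mn.2 / ((mn.1 : ℂ) * x + (mn.2 : ℂ)) ^ (2 * s) with hg
  set σ := (2*s).re with hσdef
  set K : ℝ := Real.exp (Real.pi * |(2*s).im|) * (min x.re 1) ^ (-σ) * 2 ^ σ with hK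
  have hK0 : 0 ≤ K := by
    have hc0 : (0:ℝ) < min x.re 1 := lt_min hx one_pos
    have := Real.rpow_nonneg hc0.le (-σ)
    have hE : (0:ℝ) ≤ Real.exp (Real.pi * |(2*s).im|) := (Real.exp_pos _).le
    positivity
  -- summability of the majorant
  have hsum1 : Summable (fun n : ℕ => ((n:ℝ)+1) ^ (-(σ/2))) := by
    have h0 : Summable (fun n : ℕ => ((n:ℝ)) ^ (-(σ/2))) :=
      Real.summable_nat_rpow.mpr (by linarith)
    have := (summable_nat_add_iff 1).mpr h0
    simpa using this
  have hmaj : Summable (fun mn : ℕ × ℕ =>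
      K * (((mn.1:ℝ)+1) ^ (-(σ/2)) * ((mn.2:ℝ)+1) ^ (-(σ/2)))) := by
    apply Summable.mul_left K
    exact hsum1.mul_of_nonneg hsum1 (fun n => Real.rpow_nonneg (by positivity) _)
      (fun n => Real.rpow_nonneg (by positivity) _)
  have hwnorm : ∀ m n : ℕ, ‖starWeight m n‖ ≤ 1 := by
    intro m n; unfold starWeight; split_ifs <;> norm_num
  have hbound : ∀ mn : ℕ × ℕ,
      ‖g mn‖ ≤ K * (((mn.1:ℝ)+1) ^ (-(σ/2)) * ((mn.2:ℝ)+1) ^ (-(σ/2))) := by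
    rintro ⟨m, n⟩
    rcases eq_or_ne (m + n) 0 with h0 | h0
    · obtain ⟨rfl, rfl⟩ := Nat.add_eq_zero.mp h0
      have hgz : g (0,0) = 0 := by simp [hg, starWeight]
      rw [hgz, norm_zero]
      exact mul_nonneg hK0 (by positivity)
    · calc ‖g (m,n)‖ = ‖starWeight m n‖ * ‖((m:ℂ)*x + (n:ℂ)) ^ (-(2*s))‖ := by
            simp only [hg]
            rw [norm_div, Complex.cpow_neg, norm_inv, div_eq_mul_inv]
      _ ≤ 1 * (K * (((m:ℝ)+1) ^ (-(σ/2)) * ((n:ℝ)+1) ^ (-(σ/2)))) := by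
            apply mul_le_mul (hwnorm m n) (myChain x hx (2*s) hσ0 m n h0) (norm_nonneg _)
              one_pos.le
      _ = K * (((m:ℝ)+1) ^ (-(σ/2)) * ((n:ℝ)+1) ^ (-(σ/2))) := one_mul _
  have hgsum : Summable g := Summable.of_norm_bounded hmaj hbound
  have hFsum : Summable (fun m : ℕ => ∑' n : ℕ, g (m, n)) := hgsum.prod
  -- split the double sum
  have hsplit : (∑' mn : ℕ × ℕ, g mn) = (∑' n : ℕ, g (0, n)) + ∑' m : ℕ, ∑' n : ℕ, g (m+1, n) := by
    rw [Summable.tsum_prod hgsum, Summable.tsum_eq_zero_add hFsum]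
  -- the zero row
  have hrow0 : ∀ n : ℕ, g (0, n) = (1/2) * (1 / (n:ℂ)^(2*s)) := by
    intro n
    rcases eq_or_ne n 0 with rfl | hn
    · simp [hg, starWeight, Complex.zero_cpow h2sne]
    · simp only [hg, starWeight]
      rw [if_neg (by simp [hn]), if_pos (by simp)]
      simp only [Nat.cast_zero, zero_mul, zero_add]
      ring
  have hF0 : (∑' n : ℕ, g (0, n)) = (1/2) * riemannZeta (2*s) := by
    rw [tsum_congr hrow0, tsum_mul_left, ← zeta_eq_tsum_one_div_nat_cpow h2s1]
  -- the rows m + 1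
  have hrow : ∀ m n : ℕ, g (m+1, n) = 1 / ((n:ℂ) + ((m:ℂ)+1)*x) ^ (2*s)
      - (if n = 0 then (1/2) * (((m:ℂ)+1)*x) ^ (-(2*s)) else 0) := by
    intro m n
    have hbase : (((m+1:ℕ) : ℂ) * x + (n:ℂ)) = (n:ℂ) + ((m:ℂ)+1)*x := by push_cast; ring
    rcases eq_or_ne n 0 with rfl | hn
    · simp only [hg, starWeight, Nat.succ_ne_zero, false_and, if_false, or_true, if_true,
        if_pos rfl, Nat.cast_zero, add_zero, Complex.cpow_neg]
      rw [show (((m+1:ℕ) : ℂ) * x) = (0:ℂ) + ((m:ℂ)+1)*x by push_cast; ring]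
      ring
    · simp only [hg, starWeight, Nat.succ_ne_zero, false_and, if_false, hn, or_self,
        if_neg hn]
      rw [hbase, sub_zero]
  have hdeltasum : ∀ m : ℕ, Summable (fun n : ℕ =>
      if n = 0 then (1/2) * (((m:ℂ)+1)*x) ^ (-(2*s)) else 0) := by
    intro m
    apply summable_of_ne_finset_zero (s := {0})
    intro n hn
    rw [if_neg (by simpa using hn)]
  have hfullsummable : ∀ m : ℕ, Summable (fun n : ℕ => 1 / ((n:ℂ) + ((m:ℂ)+1)*x) ^ (2*s)) := by
    intro m
    have h1 : Summable (fun n : ℕ => g (m+1, n)) := hgsum.prod_factor (m+1)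
    apply (h1.add (hdeltasum m)).congr
    intro n
    rw [hrow m n]; ring
  have hrowsum : ∀ m : ℕ, (∑' n : ℕ, g (m+1, n)) =
      hurwitzZetaSeries (2*s) (((m:ℂ)+1)*x) - (1/2) * (((m:ℂ)+1)*x) ^ (-(2*s)) := by
    intro m
    calc (∑' n : ℕ, g (m+1,n))
        = ∑' n : ℕ, (1 / ((n:ℂ) + ((m:ℂ)+1)*x) ^ (2*s)
            - (if n = 0 then (1/2) * (((m:ℂ)+1)*x) ^ (-(2*s)) else 0)) := tsum_congr (hrow m)
      _ = (∑' n : ℕ, 1 / ((n:ℂ) + ((m:ℂ)+1)*x) ^ (2*s))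
            - ∑' n : ℕ, (if n = 0 then (1/2) * (((m:ℂ)+1)*x) ^ (-(2*s)) else 0) :=
          Summable.tsum_sub (hfullsummable m) (hdeltasum m)
      _ = hurwitzZetaSeries (2*s) (((m:ℂ)+1)*x) - (1/2) * (((m:ℂ)+1)*x) ^ (-(2*s)) := by
          rw [tsum_ite_eq]; rfl
  -- summability of the two RHS pieces
  have hHsum : Summable (fun m : ℕ =>
      hurwitzZetaSeries (2*s) (((m:ℂ)+1)*x) - (1/2) * (((m:ℂ)+1)*x) ^ (-(2*s))) := by
    have h1 : Summable (fun m : ℕ => ∑' n : ℕ, g (m+1, n)) :=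
      (summable_nat_add_iff 1).mpr hFsum
    exact h1.congr hrowsum
  have hTsum0 : Summable (fun m : ℕ => 1 / ((m:ℂ)+1) ^ (2*s - 1)) := by
    have h0 : Summable (fun n : ℕ => 1 / (n:ℂ) ^ (2*s-1)) :=
      Complex.summable_one_div_nat_cpow.mpr h2sm1
    have := (summable_nat_add_iff 1).mpr h0
    simpa using this
  have hcpowsplit : ∀ m : ℕ, (((m:ℂ)+1)*x) ^ (1 - 2*s) = ((m:ℂ)+1) ^ (1-2*s) * x ^ (1-2*s) := by
    intro m
    have h1 : ((m:ℂ)+1) = ((((m:ℝ)+1) : ℝ) : ℂ) := by push_cast; ring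
    rw [h1, myCpowRealMul ((m:ℝ)+1) (by positivity) hxne]
  have hTval : ∀ m : ℕ, (((m:ℂ)+1)*x) ^ (1-2*s) / (1-2*s)
      = (x ^ (1-2*s) / (1-2*s)) * (1/((m:ℂ)+1)^(2*s-1)) := by
    intro m
    rw [hcpowsplit m]
    rw [show (1-2*s : ℂ) = -(2*s-1) by ring, Complex.cpow_neg]
    ring
  have hTsum : Summable (fun m : ℕ => (((m:ℂ)+1)*x) ^ (1-2*s) / (1-2*s)) := by
    apply (hTsum0.mul_left (x ^ (1-2*s) / (1-2*s))).congr
    intro m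
    rw [show (1-2*s : ℂ) = -(2*s-1) by ring] at hTval ⊢
    exact (hTval m).symm
  have hTtsum : (∑' m : ℕ, (((m:ℂ)+1)*x) ^ (1-2*s) / (1-2*s))
      = x ^ (1-2*s) / (1-2*s) * riemannZeta (2*s-1) := by
    rw [tsum_congr hTval, tsum_mul_left, ← zeta_eq_tsum_one_div_nat_add_one_cpow h2sm1]
  -- split the RHS sum
  have hRHSsplit : (∑' n : ℕ, (hurwitzZetaSeries (2 * s) ((n + 1) * x) -
          (1 / 2) * ((n + 1 : ℂ) * x) ^ (-(2 * s)) +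
          ((n + 1 : ℂ) * x) ^ (1 - 2 * s) / (1 - 2 * s)))
      = (∑' m : ℕ, (hurwitzZetaSeries (2*s) (((m:ℂ)+1)*x)
            - (1/2) * (((m:ℂ)+1)*x) ^ (-(2*s))))
        + ∑' m : ℕ, (((m:ℂ)+1)*x) ^ (1-2*s) / (1-2*s) := Summable.tsum_add hHsum hTsum
  -- nonvanishing of denominators
  have h1ne : (1 - 2*s : ℂ) ≠ 0 := by
    intro h
    have := congrArg Complex.re h
    rw [Complex.sub_re, Complex.one_re, Complex.zero_re] at this
    linarith
  have h2ne : (2*s - 1 : ℂ) ≠ 0 := by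
    intro h
    have := congrArg Complex.re h
    rw [Complex.sub_re, Complex.one_re, Complex.zero_re] at this
    linarith
  rw [hsplit, hF0, tsum_congr hrowsum, hRHSsplit, hTtsum]
  generalize (∑' m : ℕ, (hurwitzZetaSeries (2*s) (((m:ℂ)+1)*x)
      - (1/2) * (((m:ℂ)+1)*x) ^ (-(2*s)))) = S
  field_simp
  ring
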